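/- Let n ≥ 3 and A_i = i!/2. The map a_n : A_n → {0, 1, ..., n!/2 − 1} defined by a_n(σ) = Σ_{i=1}^{n−2} inv_i(σ) · A_{n−i} is a bijection. -/

import Mathlib

/-- A signed permutation `π` of `[n]`: `π(i) = ε i · σ(i)` with `σ` a permutation
of `[n]` and signs `ε i ∈ {±1}`.  Positions are encoded by `Fin n`
(position `i ∈ [n]` corresponds to `⟨i-1, _⟩ : Fin n`). -/
structure SignedPerm (n : ℕ) where
  σ : Equiv.Perm (Fin n)
  ε : Fin n → ℤ
  hε : ∀ i, ε i = 1 ∨ ε i = -1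

namespace SignedPerm

variable {n : ℕ}

/-- The signed value `π(i) = ε i · σ(i) ∈ {-n, …, -1, 1, …, n}` (1-based value). -/
def val (π : SignedPerm n) (i : Fin n) : ℤ :=
  π.ε i * ((π.σ i : ℕ) + 1)

/-- The standard basis vector `e i` of `ℝ^n`. -/
def e (i : Fin n) : Fin n → ℝ := Pi.single i 1

/-- The action of a signed permutation on `ℝ^n`, determined by
`π · e i = ε i · e (σ i)`. -/
def act (π : SignedPerm n) (v : Fin n → ℝ) : Fin n → ℝ :=
  fun j => (π.ε (π.σ.symm j) : ℝ) * v (π.σ.symm j)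

/-- The positive root system `Φₙ⁺ = {e k, e i + e j, e i - e j : k, i < j}` of `Bₙ`. -/
def PhiPos (n : ℕ) : Set (Fin n → ℝ) :=
  {v | (∃ k : Fin n, v = e k) ∨ ∃ i j : Fin n, i < j ∧ (v = e i + e j ∨ v = e i - e j)}

/-- The positive roots `Φₙ,ᵢ⁺ = {e i, e i + e j, e i - e j : i < j ≤ n}`. -/
def PhiPosI (n : ℕ) (i : Fin n) : Set (Fin n → ℝ) :=
  {v | v = e i ∨ ∃ j : Fin n, i < j ∧ (v = e i + e j ∨ v = e i - e j)}

/-- The `i`-inversion number `invᵢ π = #{v ∈ Φₙ,ᵢ⁺ : π · v ∈ -Φₙ⁺}`. -/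
noncomputable def invi (i : Fin n) (π : SignedPerm n) : ℕ :=
  Set.ncard {v | v ∈ PhiPosI n i ∧ -(π.act v) ∈ PhiPos n}

/-- The inversion number `inv π = #{v ∈ Φₙ⁺ : π · v ∈ -Φₙ⁺}`. -/
noncomputable def inv (π : SignedPerm n) : ℕ :=
  Set.ncard {v | v ∈ PhiPos n ∧ -(π.act v) ∈ PhiPos n}

end SignedPerm

namespace ABij

open SignedPerm Finset Equiv

variable {n : ℕ}

lemma e_apply (i j : Fin n) : e i j = if j = i then 1 else 0 := by
  simp [e, Pi.single_apply]

lemma e_apply_self (i : Fin n) : e i i = 1 := by simp [e_apply]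

lemma e_apply_ne {i j : Fin n} (h : j ≠ i) : e i j = 0 := by simp [e_apply, h]

lemma e_inj {i j : Fin n} (h : e i = e j) : i = j := by
  by_contra hne
  have := congrFun h i
  rw [e_apply_self, e_apply_ne (Ne.symm ?_)] at this
  · norm_num at this
  · exact fun hh => hne hh.symm

lemma exists_pos {v : Fin n → ℝ} (h : v ∈ PhiPos n) : ∃ m, 0 < v m := by
  rcases h with ⟨k, rfl⟩ | ⟨i, j, hij, rfl | rfl⟩
  · exact ⟨k, by simp [e_apply_self]⟩
  · exact ⟨i, by simp [e_apply_self, e_apply_ne (ne_of_lt hij)]⟩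
  · exact ⟨i, by simp [e_apply_self, e_apply_ne (ne_of_lt hij)]⟩

lemma not_mem_of_nonpos {v : Fin n → ℝ} (h : ∀ m, v m ≤ 0) : v ∉ PhiPos n := by
  intro hv
  obtain ⟨m, hm⟩ := exists_pos hv
  exact absurd (h m) (not_le.2 hm)

lemma sub_mem_iff {a b : Fin n} (hab : a ≠ b) : e a - e b ∈ PhiPos n ↔ a < b := by
  constructor
  · rintro (⟨k, hk⟩ | ⟨i, j, hij, h | h⟩)
    · have h2 : (0:ℝ) - 1 = if b = k then 1 else 0 := by
        simpa [Pi.sub_apply, e_apply, Ne.symm hab] using congrFun hk b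
      split_ifs at h2 <;> norm_num at h2
    · have h2 : (0:ℝ) - 1 = (if b = i then (1:ℝ) else 0) + (if b = j then 1 else 0) := by
        simpa [Pi.sub_apply, Pi.add_apply, e_apply, Ne.symm hab] using congrFun h b
      split_ifs at h2 <;> norm_num at h2
    · have h1 : (1:ℝ) - 0 = (if a = i then (1:ℝ) else 0) - (if a = j then 1 else 0) := by
        simpa [Pi.sub_apply, e_apply, hab] using congrFun h a
      have h2 : (0:ℝ) - 1 = (if b = i then (1:ℝ) else 0) - (if b = j then 1 else 0) := by
        simpa [Pi.sub_apply, e_apply, Ne.symm hab] using congrFun h b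
      split_ifs at h1 with hai haj <;> split_ifs at h2 with hbi hbj hbj' <;>
        (try norm_num at h1) <;> (try norm_num at h2) <;>
        first
        | (exact absurd (hai ▸ haj ▸ hij) (lt_irrefl _))
        | (subst hai; subst hbj; exact hij)
        | (subst hai; subst hbj'; exact hij)
        | skip
  · intro h
    exact Or.inr ⟨a, b, h, Or.inr rfl⟩

def P (σ : Equiv.Perm (Fin n)) : SignedPerm n := ⟨σ, fun _ => 1, fun _ => Or.inl rfl⟩

def cF (σ : Equiv.Perm (Fin n)) (i : Fin n) : Finset (Fin n) :=
  univ.filter fun j => i < j ∧ σ j < σ i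

def c (σ : Equiv.Perm (Fin n)) (i : Fin n) : ℕ := (cF σ i).card

def pF (σ : Equiv.Perm (Fin n)) : Finset (Fin n × Fin n) :=
  univ.filter fun p => p.1 < p.2 ∧ σ p.2 < σ p.1

def N (σ : Equiv.Perm (Fin n)) : ℕ := (pF σ).card

lemma act_P_e (σ : Equiv.Perm (Fin n)) (i : Fin n) : (P σ).act (e i) = e (σ i) := by
  funext j
  simp [act, P, e_apply, Equiv.symm_apply_eq]

lemma act_P_add_e (σ : Equiv.Perm (Fin n)) (i j : Fin n) :
    (P σ).act (e i + e j) = e (σ i) + e (σ j) := by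
  funext m
  simp [act, P, e_apply, Equiv.symm_apply_eq]

lemma act_P_sub_e (σ : Equiv.Perm (Fin n)) (i j : Fin n) :
    (P σ).act (e i - e j) = e (σ i) - e (σ j) := by
  funext m
  simp [act, P, e_apply, Equiv.symm_apply_eq]

lemma neg_e_nonpos (a : Fin n) (m : Fin n) : -(e a) m ≤ 0 := by
  simp only [Pi.neg_apply, e_apply]; split_ifs <;> norm_num

lemma neg_add_e_nonpos (a b : Fin n) (m : Fin n) : -(e a + e b) m ≤ 0 := by
  simp only [Pi.neg_apply, Pi.add_apply, e_apply]; split_ifs <;> norm_num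

lemma invi_P (σ : Equiv.Perm (Fin n)) (i : Fin n) : invi i (P σ) = c σ i := by
  have hset : {v | v ∈ PhiPosI n i ∧ -((P σ).act v) ∈ PhiPos n}
      = (fun j => e i - e j) '' ↑(cF σ i) := by
    ext v
    constructor
    · rintro ⟨rfl | ⟨j, hij, rfl | rfl⟩, hneg⟩
      · rw [act_P_e] at hneg
        exact absurd hneg (not_mem_of_nonpos (neg_e_nonpos _))
      · rw [act_P_add_e] at hneg
        exact absurd hneg (not_mem_of_nonpos (neg_add_e_nonpos _ _))
      · rw [act_P_sub_e, neg_sub] at hneg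
        have hne : σ j ≠ σ i := fun h => absurd (σ.injective h) (ne_of_gt hij)
        have hlt : σ j < σ i := (sub_mem_iff hne).1 hneg
        exact ⟨j, by simp [cF, hij, hlt], rfl⟩
    · rintro ⟨j, hj, rfl⟩
      simp only [cF, coe_filter, Set.mem_setOf_eq, mem_univ, true_and] at hj
      refine ⟨Or.inr ⟨j, hj.1, Or.inr rfl⟩, ?_⟩
      rw [act_P_sub_e, neg_sub]
      have hne : σ j ≠ σ i := fun h => absurd (σ.injective h) (ne_of_gt hj.1)
      exact (sub_mem_iff hne).2 hj.2
  rw [invi, hset, Set.ncard_image_of_injOn, Set.ncard_coe_finset]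
  · rfl
  · intro x _ y _ hxy
    exact e_inj (sub_right_injective hxy)

lemma sub_e_inj {a b a' b' : Fin n} (hab : a ≠ b) (ha'b' : a' ≠ b')
    (h : e a - e b = e a' - e b') : a = a' ∧ b = b' := by
  have h1 : (1:ℝ) - 0 = (if a = a' then (1:ℝ) else 0) - (if a = b' then 1 else 0) := by
    simpa [Pi.sub_apply, e_apply, hab] using congrFun h a
  have haa' : a = a' := by
    by_contra hne
    rw [if_neg hne] at h1
    split_ifs at h1 <;> norm_num at h1
  subst haa'
  exact ⟨rfl, e_inj (sub_right_injective h)⟩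

lemma inv_P (σ : Equiv.Perm (Fin n)) : inv (P σ) = N σ := by
  have hset : {v | v ∈ PhiPos n ∧ -((P σ).act v) ∈ PhiPos n}
      = (fun p : Fin n × Fin n => e p.1 - e p.2) '' ↑(pF σ) := by
    ext v
    constructor
    · rintro ⟨⟨k, rfl⟩ | ⟨i, j, hij, rfl | rfl⟩, hneg⟩
      · rw [act_P_e] at hneg
        exact absurd hneg (not_mem_of_nonpos (neg_e_nonpos _))
      · rw [act_P_add_e] at hneg
        exact absurd hneg (not_mem_of_nonpos (neg_add_e_nonpos _ _))
      · rw [act_P_sub_e, neg_sub] at hneg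
        have hne : σ j ≠ σ i := fun h => absurd (σ.injective h) (ne_of_gt hij)
        have hlt : σ j < σ i := (sub_mem_iff hne).1 hneg
        exact ⟨(i, j), by simp [pF, hij, hlt], rfl⟩
    · rintro ⟨⟨i, j⟩, hj, rfl⟩
      simp only [pF, coe_filter, Set.mem_setOf_eq, mem_univ, true_and] at hj
      refine ⟨Or.inr ⟨i, j, hj.1, Or.inr rfl⟩, ?_⟩
      rw [act_P_sub_e, neg_sub]
      have hne : σ j ≠ σ i := fun h => absurd (σ.injective h) (ne_of_gt hj.1)
      exact (sub_mem_iff hne).2 hj.2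
  rw [inv, hset, Set.ncard_image_of_injOn, Set.ncard_coe_finset]
  · rfl
  · rintro ⟨x1, x2⟩ hx ⟨y1, y2⟩ hy hxy
    simp only [pF, coe_filter, Set.mem_setOf_eq, mem_univ, true_and] at hx hy
    obtain ⟨h1, h2⟩ := sub_e_inj (ne_of_lt hx.1) (ne_of_lt hy.1) hxy
    simp [h1, h2]

lemma N_eq_sum (σ : Equiv.Perm (Fin n)) : N σ = ∑ i, c σ i := by
  simp only [N, pF, c, cF, Finset.card_filter]
  rw [Fintype.sum_prod_type]

open Equiv.Perm in
lemma sign_eq_signAux (σ : Equiv.Perm (Fin n)) : sign σ = signAux σ := by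
  refine swap_induction_on σ ?_ ?_
  · simp
  · intro f x y hxy ih
    rw [signAux_mul, Equiv.Perm.sign_mul, ih, signAux_swap hxy, sign_swap hxy]

open Equiv.Perm in
lemma signAux_eq_pow (σ : Equiv.Perm (Fin n)) :
    signAux σ = (-1) ^ ((finPairsLT n).filter fun x => σ x.1 ≤ σ x.2).card := by
  rw [signAux, Finset.prod_ite, Finset.prod_const, Finset.prod_const, one_pow, mul_one]

lemma N_card_eq (σ : Equiv.Perm (Fin n)) :
    N σ = ((Equiv.Perm.finPairsLT n).filter fun x => σ x.1 ≤ σ x.2).card := by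
  refine Finset.card_bij' (fun p _ => ⟨p.2, p.1⟩) (fun x _ => (x.2, x.1)) ?_ ?_ ?_ ?_
  · rintro ⟨p1, p2⟩ hp
    simp only [pF, mem_filter, mem_univ, true_and] at hp
    simp only [mem_filter, Equiv.Perm.mem_finPairsLT]
    exact ⟨hp.1, le_of_lt hp.2⟩
  · rintro ⟨x1, x2⟩ hx
    simp only [mem_filter, Equiv.Perm.mem_finPairsLT] at hx
    simp only [pF, mem_filter, mem_univ, true_and]
    refine ⟨hx.1, lt_of_le_of_ne hx.2 ?_⟩
    intro h
    exact absurd (σ.injective h).symm (ne_of_lt hx.1)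
  · intro a _; rfl
  · intro a _; rfl

lemma sign_eq_pow_N (σ : Equiv.Perm (Fin n)) : Equiv.Perm.sign σ = (-1) ^ N σ := by
  rw [sign_eq_signAux, signAux_eq_pow, N_card_eq]

lemma even_N_iff (σ : Equiv.Perm (Fin n)) : Even (N σ) ↔ σ ∈ alternatingGroup (Fin n) := by
  rw [Equiv.Perm.mem_alternatingGroup, sign_eq_pow_N, neg_one_pow_eq_one_iff_even]
  decide

lemma ncard_even (hn : 3 ≤ n) : Set.ncard {σ : Equiv.Perm (Fin n) | Even (N σ)}
    = Nat.factorial n / 2 := by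
  have h1 : {σ : Equiv.Perm (Fin n) | Even (N σ)} = (alternatingGroup (Fin n) : Set _) := by
    ext σ; exact even_N_iff σ
  have hnt : Nontrivial (Fin n) := Fin.nontrivial_iff_two_le.2 (by omega)
  have h2 := two_mul_card_alternatingGroup (α := Fin n)
  rw [Fintype.card_perm, Fintype.card_fin] at h2
  rw [h1, ← Nat.card_coe_set_eq]
  simp only [SetLike.coe_sort_coe, Nat.card_eq_fintype_card]
  omega

lemma card_lt_val (σ : Equiv.Perm (Fin n)) (i : Fin n) :
    (univ.filter fun j => σ j < σ i).card = (σ i).val := by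
  have himg : (univ.filter fun j => σ j < σ i) = (Finset.Iio (σ i)).image σ.symm := by
    ext j
    simp only [mem_filter, mem_univ, true_and, Finset.mem_image, Finset.mem_Iio]
    constructor
    · intro h
      exact ⟨σ j, h, by simp⟩
    · rintro ⟨a, ha, rfl⟩
      simpa using ha
  rw [himg, Finset.card_image_of_injective _ σ.symm.injective, Fin.card_Iio]

lemma split_val (σ : Equiv.Perm (Fin n)) (i : Fin n) :
    (σ i).val = c σ i + (univ.filter fun j => j < i ∧ σ j < σ i).card := by
  have hsplit : (univ.filter fun j => σ j < σ i)
      = (cF σ i) ∪ (univ.filter fun j => j < i ∧ σ j < σ i) := by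
    ext j
    simp only [cF, mem_filter, mem_univ, true_and, Finset.mem_union]
    constructor
    · intro h
      rcases lt_trichotomy i j with hij | rfl | hji
      · exact Or.inl ⟨hij, h⟩
      · exact absurd h (lt_irrefl _)
      · exact Or.inr ⟨hji, h⟩
    · exact fun h => h.elim And.right And.right
  have hdisj : Disjoint (cF σ i) (univ.filter fun j => j < i ∧ σ j < σ i) := by
    rw [Finset.disjoint_left]
    intro j hj1 hj2
    simp only [cF, mem_filter, mem_univ, true_and] at hj1 hj2
    exact absurd (lt_trans hj1.1 hj2.1) (lt_irrefl _)
  rw [← card_lt_val σ i, hsplit, Finset.card_union_of_disjoint hdisj, c]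

lemma code_inj_aux {σ τ : Equiv.Perm (Fin n)} {i : Fin n} (hc : c σ i = c τ i)
    (hIH : ∀ k, k < i → σ k = τ k) (hlt : σ i < τ i) : False := by
  have hA : (univ.filter fun j => j < i ∧ σ j < σ i)
      = univ.filter fun j => j < i ∧ τ j < σ i := by
    ext j
    simp only [mem_filter, mem_univ, true_and]
    exact and_congr_right fun hj => by rw [hIH j hj]
  have hB : (univ.filter fun j => j < i ∧ τ j < τ i)
      = (univ.filter fun j => j < i ∧ τ j < σ i)
        ∪ (univ.filter fun j => j < i ∧ σ i ≤ τ j ∧ τ j < τ i) := by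
    ext j
    simp only [mem_filter, mem_univ, true_and, Finset.mem_union, Fin.lt_def, Fin.le_def] at *
    omega
  have hdisj : Disjoint (univ.filter fun j => j < i ∧ τ j < σ i)
      (univ.filter fun j => j < i ∧ σ i ≤ τ j ∧ τ j < τ i) := by
    rw [Finset.disjoint_left]
    intro j hj1 hj2
    simp only [mem_filter, mem_univ, true_and, Fin.lt_def, Fin.le_def] at hj1 hj2
    omega
  have h1 := split_val σ i
  have h2 := split_val τ i
  rw [hA] at h1
  rw [hB, Finset.card_union_of_disjoint hdisj] at h2
  set D := univ.filter fun j => j < i ∧ σ i ≤ τ j ∧ τ j < τ i with hD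
  have hDcard : D.card ≤ (Finset.Ioo (σ i).val (τ i).val).card := by
    apply Finset.card_le_card_of_injOn (fun j => (τ j).val)
    · intro j hj
      simp only [Finset.mem_coe, hD, mem_filter, mem_univ, true_and] at hj
      have hne : τ j ≠ σ i := by
        intro h
        have : σ j = σ i := by rw [hIH j hj.1, h]
        exact absurd (σ.injective this) (ne_of_lt hj.1)
      simp only [Finset.mem_coe, Finset.mem_Ioo]
      refine ⟨lt_of_le_of_ne hj.2.1 ?_, hj.2.2⟩
      intro h
      exact hne (Fin.ext h.symm)
    · intro a _ b _ hab
      exact τ.injective (Fin.ext hab)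
  rw [Nat.card_Ioo] at hDcard
  have hvlt : (σ i).val < (τ i).val := hlt
  omega

lemma code_inj {σ τ : Equiv.Perm (Fin n)} (h : ∀ i, c σ i = c τ i) : σ = τ := by
  have H : ∀ i : Fin n, (∀ k, k < i → σ k = τ k) → σ i = τ i := by
    intro i hIH
    rcases lt_trichotomy (σ i) (τ i) with hlt | heq | hgt
    · exact absurd (code_inj_aux (h i) hIH hlt) not_false
    · exact heq
    · have hIH' : ∀ k, k < i → τ k = σ k := fun k hk => (hIH k hk).symm
      exact absurd (code_inj_aux (h i).symm hIH' hgt) not_false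
  have hall : ∀ m : ℕ, ∀ i : Fin n, i.val = m → σ i = τ i := by
    intro m
    induction m using Nat.strong_induction_on with
    | _ m ih =>
      intro i him
      apply H
      intro k hk
      exact ih k.val (him ▸ hk) k rfl
  exact Equiv.ext fun i => hall i.val i rfl

lemma fact_succ_div_two (m : ℕ) (hm : 2 ≤ m) :
    (m + 1).factorial / 2 = (m + 1) * (m.factorial / 2) := by
  rw [Nat.factorial_succ, Nat.mul_div_assoc _ (Nat.dvd_factorial (by omega) hm)]

lemma radix_lt (m : ℕ) (hm : 1 ≤ m) (d : ℕ → ℕ) (hd : ∀ k ∈ Finset.Icc 2 m, d k ≤ k) :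
    (∑ k ∈ Finset.Icc 2 m, d k * (k.factorial / 2)) < (m + 1).factorial / 2 := by
  induction m, hm using Nat.le_induction with
  | base => simp
  | succ m hm ih =>
    rw [Finset.sum_Icc_succ_top (by omega)]
    have h1 : (∑ k ∈ Finset.Icc 2 m, d k * (k.factorial / 2)) < (m + 1).factorial / 2 :=
      ih fun k hk => hd k (by simp at hk ⊢; omega)
    have h2 : d (m + 1) ≤ m + 1 := hd (m + 1) (by simp; omega)
    rw [fact_succ_div_two (m + 1) (by omega)]
    calc (∑ k ∈ Finset.Icc 2 m, d k * (k.factorial / 2)) + d (m+1) * ((m+1).factorial / 2)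
        < (m+1).factorial / 2 + d (m+1) * ((m+1).factorial / 2) := by omega
      _ = (d (m+1) + 1) * ((m+1).factorial / 2) := by ring
      _ ≤ (m + 2) * ((m+1).factorial / 2) := Nat.mul_le_mul_right _ (by omega)

lemma digit_unique {w a b s t : ℕ} (hs : s < w) (ht : t < w) (h : s + a * w = t + b * w) :
    a = b ∧ s = t := by
  have key : ∀ a' b' s' t' : ℕ, s' < w → s' + a' * w = t' + b' * w → a' < b' → False := by
    intro a' b' s' t' hs' h' hab
    have : s' + a' * w < t' + b' * w := by
      calc s' + a' * w < w + a' * w := by omega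
        _ = (a' + 1) * w := by ring
        _ ≤ b' * w := Nat.mul_le_mul_right w (by omega)
        _ ≤ t' + b' * w := Nat.le_add_left _ _
    omega
  rcases lt_trichotomy a b with hab | rfl | hab
  · exact absurd (key a b s t hs h hab) not_false
  · constructor
    · rfl
    · omega
  · exact absurd (key b a t s ht h.symm hab) not_false

lemma radix_eq (m : ℕ) (hm : 1 ≤ m) (d e : ℕ → ℕ) (hd : ∀ k ∈ Finset.Icc 2 m, d k ≤ k)
    (he : ∀ k ∈ Finset.Icc 2 m, e k ≤ k)
    (h : (∑ k ∈ Finset.Icc 2 m, d k * (k.factorial / 2))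
        = ∑ k ∈ Finset.Icc 2 m, e k * (k.factorial / 2)) :
    ∀ k ∈ Finset.Icc 2 m, d k = e k := by
  induction m, hm using Nat.le_induction with
  | base => simp
  | succ m hm ih =>
    have hd' : ∀ k ∈ Finset.Icc 2 m, d k ≤ k := fun k hk => hd k (by simp at hk ⊢; omega)
    have he' : ∀ k ∈ Finset.Icc 2 m, e k ≤ k := fun k hk => he k (by simp at hk ⊢; omega)
    rw [Finset.sum_Icc_succ_top (by omega), Finset.sum_Icc_succ_top (by omega)] at h
    have hdlt := radix_lt m hm d hd'
    have helt := radix_lt m hm e he'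
    obtain ⟨htop, hsum⟩ := digit_unique hdlt helt h
    intro k hk
    simp only [Finset.mem_Icc] at hk
    rcases Nat.lt_or_ge k (m + 1) with hk' | hk'
    · exact ih hd' he' hsum k (by simp; omega)
    · have : k = m + 1 := by omega
      rw [this, htop]

lemma c_le (σ : Equiv.Perm (Fin n)) (i : Fin n) : c σ i ≤ n - 1 - i.val := by
  rw [c, ← Fin.card_Ioi i]
  apply Finset.card_le_card
  intro j hj
  simp only [cF, mem_filter, mem_univ, true_and] at hj
  simpa [Finset.mem_Ioi] using hj.1

lemma P_eta (π : SignedPerm n) (h : ∀ i, π.ε i = 1) : π = P π.σ := by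
  obtain ⟨σ, ε, hε⟩ := π
  simp only [P, SignedPerm.mk.injEq]
  exact ⟨trivial, funext h⟩

lemma P_inj : Function.Injective (P : Equiv.Perm (Fin n) → SignedPerm n) :=
  fun _ _ h => congrArg SignedPerm.σ h

lemma domain_eq : {π : SignedPerm n | (∀ i, π.ε i = 1) ∧ Even (SignedPerm.inv π)}
    = P '' {σ | Even (N σ)} := by
  ext π
  constructor
  · rintro ⟨h1, h2⟩
    refine ⟨π.σ, ?_, (P_eta π h1).symm⟩
    rw [P_eta π h1, inv_P] at h2
    exact h2
  · rintro ⟨σ, hσ, rfl⟩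
    exact ⟨fun i => rfl, by rwa [inv_P]⟩

def idx (hn : 3 ≤ n) (k : ℕ) : Fin n := ⟨(n - 1 - k) % n, Nat.mod_lt _ (by omega)⟩

lemma idx_val (hn : 3 ≤ n) {k : ℕ} (hk : k ≤ n - 1) : (idx hn k).val = n - 1 - k := by
  simp only [idx]
  exact Nat.mod_eq_of_lt (by omega)

lemma sum_reindex (hn : 3 ≤ n) (σ : Equiv.Perm (Fin n)) :
    (∑ i ∈ univ.filter (fun i : Fin n => i.val + 1 ≤ n - 2),
        c σ i * ((n - 1 - i.val).factorial / 2))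
    = ∑ k ∈ Finset.Icc 2 (n - 1), c σ (idx hn k) * (k.factorial / 2) := by
  apply Finset.sum_nbij' (i := fun i : Fin n => n - 1 - i.val) (j := fun k => idx hn k)
  · intro a ha
    simp only [mem_filter, mem_univ, true_and] at ha
    have := a.isLt
    simp only [Finset.mem_Icc]
    omega
  · intro k hk
    simp only [Finset.mem_Icc] at hk
    simp only [mem_filter, mem_univ, true_and]
    rw [idx_val hn (by omega)]
    omega
  · intro a ha
    simp only [mem_filter, mem_univ, true_and] at ha
    have := a.isLt
    apply Fin.ext
    rw [idx_val hn (by omega)]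
    omega
  · intro k hk
    simp only [Finset.mem_Icc] at hk
    rw [idx_val hn (by omega)]
    omega
  · intro a ha
    simp only [mem_filter, mem_univ, true_and] at ha
    have := a.isLt
    have hidx : idx hn (n - 1 - a.val) = a := by
      apply Fin.ext
      rw [idx_val hn (by omega)]
      omega
    rw [hidx]

lemma c_idx_le (hn : 3 ≤ n) (σ : Equiv.Perm (Fin n)) :
    ∀ k ∈ Finset.Icc 2 (n - 1), c σ (idx hn k) ≤ k := by
  intro k hk
  simp only [Finset.mem_Icc] at hk
  have := c_le σ (idx hn k)
  rw [idx_val hn (by omega)] at this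
  omega

lemma N_split (hn : 3 ≤ n) (σ : Equiv.Perm (Fin n)) :
    N σ = (∑ i ∈ univ.filter (fun i : Fin n => i.val + 1 ≤ n - 2), c σ i)
      + c σ ⟨n - 2, by omega⟩ := by
  rw [N_eq_sum]
  rw [← Finset.sum_filter_add_sum_filter_not univ (fun i : Fin n => i.val + 1 ≤ n - 2)]
  congr 1
  have hset : univ.filter (fun i : Fin n => ¬(i.val + 1 ≤ n - 2))
      = {(⟨n - 2, by omega⟩ : Fin n), ⟨n - 1, by omega⟩} := by
    ext i
    have := i.isLt
    simp only [mem_filter, mem_univ, true_and, Finset.mem_insert, Finset.mem_singleton,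
      Fin.ext_iff]
    omega
  rw [hset, Finset.sum_pair (Fin.ne_of_val_ne (show n - 2 ≠ n - 1 by omega))]
  have hz : c σ ⟨n - 1, by omega⟩ = 0 := by
    have h1 := c_le σ ⟨n - 1, by omega⟩
    have h2 : ((⟨n - 1, by omega⟩ : Fin n) : ℕ) = n - 1 := rfl
    omega
  rw [hz, add_zero]

end ABij


open SignedPerm in
/-- With `Aᵢ = i!/2`, the map
`aₙ(σ) = ∑_{i=1}^{n-2} invᵢ(σ) · A_{n-i}` is a bijection from the alternating
group `Aₙ` (permutations, i.e. all signs positive, with `inv σ` even) onto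
`{0, 1, …, n!/2 - 1}` (position `i ∈ [n]` is `i.val + 1` in 1-based indexing,
so `n - i = n - 1 - i.val`). -/
theorem a_bijective (n : ℕ) (hn : 3 ≤ n) :
    Set.BijOn
      (fun π : SignedPerm n =>
        ∑ i ∈ Finset.univ.filter (fun i : Fin n => i.val + 1 ≤ n - 2),
          invi i π * (Nat.factorial (n - 1 - i.val) / 2))
      {π : SignedPerm n | (∀ i, π.ε i = 1) ∧ Even (SignedPerm.inv π)}
      {m : ℕ | m < Nat.factorial n / 2} := by
  have hval : ∀ π : SignedPerm n, (∀ i, π.ε i = 1) →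
      (∑ i ∈ Finset.univ.filter (fun i : Fin n => i.val + 1 ≤ n - 2),
        invi i π * (Nat.factorial (n - 1 - i.val) / 2))
      = ∑ k ∈ Finset.Icc 2 (n - 1), ABij.c π.σ (ABij.idx hn k) * (k.factorial / 2) := by
    intro π h1
    rw [← ABij.sum_reindex hn π.σ]
    refine Finset.sum_congr rfl fun i _ => ?_
    congr 1
    conv_lhs => rw [ABij.P_eta π h1]
    exact ABij.invi_P _ _
  have hMaps : Set.MapsTo
      (fun π : SignedPerm n =>
        ∑ i ∈ Finset.univ.filter (fun i : Fin n => i.val + 1 ≤ n - 2),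
          invi i π * (Nat.factorial (n - 1 - i.val) / 2))
      {π : SignedPerm n | (∀ i, π.ε i = 1) ∧ Even (SignedPerm.inv π)}
      {m : ℕ | m < Nat.factorial n / 2} := by
    intro π hπ
    simp only [Set.mem_setOf_eq]
    rw [hval π hπ.1]
    have h := ABij.radix_lt (n - 1) (by omega) (fun k => ABij.c π.σ (ABij.idx hn k))
      (ABij.c_idx_le hn π.σ)
    have hfac : n - 1 + 1 = n := by omega
    rwa [hfac] at h
  have hInj : Set.InjOn
      (fun π : SignedPerm n =>
        ∑ i ∈ Finset.univ.filter (fun i : Fin n => i.val + 1 ≤ n - 2),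
          invi i π * (Nat.factorial (n - 1 - i.val) / 2))
      {π : SignedPerm n | (∀ i, π.ε i = 1) ∧ Even (SignedPerm.inv π)} := by
    intro π hπ π' hπ' heq
    obtain ⟨h1, h2⟩ := hπ
    obtain ⟨h1', h2'⟩ := hπ'
    simp only at heq
    rw [hval π h1, hval π' h1'] at heq
    have hk := ABij.radix_eq (n - 1) (by omega) _ _ (ABij.c_idx_le hn π.σ)
      (ABij.c_idx_le hn π'.σ) heq
    have hfil : ∀ i : Fin n, i.val + 1 ≤ n - 2 → ABij.c π.σ i = ABij.c π'.σ i := by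
      intro i hi
      have hlt := i.isLt
      have hmem : n - 1 - i.val ∈ Finset.Icc 2 (n - 1) := by
        simp only [Finset.mem_Icc]; omega
      have h := hk _ hmem
      have hidx : ABij.idx hn (n - 1 - i.val) = i :=
        Fin.ext (by rw [ABij.idx_val hn (by omega)]; omega)
      rwa [hidx] at h
    have hN : Even (ABij.N π.σ) := by
      have h := h2
      rwa [ABij.P_eta π h1, ABij.inv_P] at h
    have hN' : Even (ABij.N π'.σ) := by
      have h := h2'
      rwa [ABij.P_eta π' h1', ABij.inv_P] at h
    rw [ABij.N_split hn] at hN hN'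
    have hsum : (∑ i ∈ Finset.univ.filter (fun i : Fin n => i.val + 1 ≤ n - 2), ABij.c π.σ i)
        = ∑ i ∈ Finset.univ.filter (fun i : Fin n => i.val + 1 ≤ n - 2), ABij.c π'.σ i :=
      Finset.sum_congr rfl fun i hi => hfil i (by simpa using hi)
    have hle1 : ABij.c π.σ ⟨n - 2, by omega⟩ ≤ 1 := by
      have h := ABij.c_le π.σ ⟨n - 2, by omega⟩
      have hv : ((⟨n - 2, by omega⟩ : Fin n) : ℕ) = n - 2 := rfl
      omega
    have hle1' : ABij.c π'.σ ⟨n - 2, by omega⟩ ≤ 1 := by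
      have h := ABij.c_le π'.σ ⟨n - 2, by omega⟩
      have hv : ((⟨n - 2, by omega⟩ : Fin n) : ℕ) = n - 2 := rfl
      omega
    obtain ⟨x, hx⟩ := hN
    obtain ⟨y, hy⟩ := hN'
    have haeq : ABij.c π.σ ⟨n - 2, by omega⟩ = ABij.c π'.σ ⟨n - 2, by omega⟩ := by omega
    have hall : ∀ i, ABij.c π.σ i = ABij.c π'.σ i := by
      intro i
      have hlt := i.isLt
      by_cases hc1 : i.val + 1 ≤ n - 2
      · exact hfil i hc1
      · by_cases hc2 : i.val = n - 2
        · have : i = ⟨n - 2, by omega⟩ := Fin.ext hc2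
          rw [this]
          exact haeq
        · have hz1 := ABij.c_le π.σ i
          have hz2 := ABij.c_le π'.σ i
          omega
    have hσ : π.σ = π'.σ := ABij.code_inj hall
    rw [ABij.P_eta π h1, ABij.P_eta π' h1', hσ]
  refine ⟨hMaps, hInj, ?_⟩
  have hT : {m : ℕ | m < Nat.factorial n / 2} = ↑(Finset.range (Nat.factorial n / 2)) := by
    ext m; simp
  have hTcard : Set.ncard {m : ℕ | m < Nat.factorial n / 2} = Nat.factorial n / 2 := by
    rw [hT, Set.ncard_coe_finset, Finset.card_range]
  have hScard : Set.ncard {π : SignedPerm n | (∀ i, π.ε i = 1) ∧ Even (SignedPerm.inv π)}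
      = Nat.factorial n / 2 := by
    rw [ABij.domain_eq, Set.ncard_image_of_injOn ABij.P_inj.injOn,
      ABij.ncard_even hn]
  have himg : (fun π : SignedPerm n =>
        ∑ i ∈ Finset.univ.filter (fun i : Fin n => i.val + 1 ≤ n - 2),
          invi i π * (Nat.factorial (n - 1 - i.val) / 2)) ''
        {π : SignedPerm n | (∀ i, π.ε i = 1) ∧ Even (SignedPerm.inv π)}
      = {m : ℕ | m < Nat.factorial n / 2} := by
    refine Set.eq_of_subset_of_ncard_le (Set.mapsTo_iff_image_subset.1 hMaps) ?_ (by rw [hT]; exact (Finset.range _).finite_toSet)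
    rw [hTcard, Set.ncard_image_of_injOn hInj, hScard]
  exact himg.superset
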